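/- With the definitions of the previous context (D_n ≠ 0, q_{2n}=p_{2n}p_{2n+1}/r_{2n+1}, and the formulas for ρ, π, σ), the sequences satisfy the third-upper-diagonal equation of AA^{-1}=I: r_{n+1}π_{n+2} + p_n ρ_{n+2} = 0 for all n ∈ ℤ. -/
import Mathlib


theorem smp_inverse_third_diagonal_equation
    (p q r ρ π D : ℤ → ℝ)
    (hre : ∀ n : ℤ, r (2 * n) = 0) (hro : ∀ n : ℤ, 0 < r (2 * n + 1))
    (hq : ∀ n : ℤ, q (2 * n) = p (2 * n) * p (2 * n + 1) / r (2 * n + 1))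
    (hD : ∀ n : ℤ, D n = q (2 * n - 1) * p (2 * n - 2) * p (2 * n + 1)
      - p (2 * n - 2) * p (2 * n) * r (2 * n + 1)
      - p (2 * n - 1) * p (2 * n + 1) * r (2 * n - 1))
    (hDne : ∀ n : ℤ, D n ≠ 0)
    (hρo : ∀ n : ℤ, ρ (2 * n + 1) = 0)
    (hρe : ∀ n : ℤ, ρ (2 * n) = r (2 * n - 1) * r (2 * n + 1) / D n)
    (hπo : ∀ n : ℤ, π (2 * n + 1) = -(p (2 * n + 3) * ρ (2 * n + 2)) / r (2 * n + 3))
    (hπe : ∀ n : ℤ, π (2 * n) = -(p (2 * n - 2) * ρ (2 * n)) / r (2 * n - 1)) :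
    ∀ n : ℤ, r (n + 1) * π (n + 2) + p n * ρ (n + 2) = 0 := by
  intro n
  obtain ⟨m, rfl | rfl⟩ := Int.even_or_odd' n
  · -- n = 2m
    have h1 : (2 * m + 1 : ℤ) + 1 = 2 * (m + 1) := by ring
    have h2 : (2 * m : ℤ) + 2 = 2 * (m + 1) := by ring
    have hπ := hπe (m + 1)
    have hrne : r (2 * m + 1) ≠ 0 := (hro m).ne'
    rw [show (2 * m : ℤ) + 1 = 2 * m + 1 by ring, h2, hπ]
    have e1 : (2 * (m + 1) : ℤ) - 2 = 2 * m := by ring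
    have e2 : (2 * (m + 1) : ℤ) - 1 = 2 * m + 1 := by ring
    rw [e1, e2]
    field_simp
    ring
  · -- n = 2m+1
    rw [show (2 * m + 1 : ℤ) + 1 = 2 * (m + 1) by ring,
        show (2 * m + 1 : ℤ) + 2 = 2 * (m + 1) + 1 by ring, hre, hρo]
    ring
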